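/- Let A be a commutative noetherian ring and M a finitely generated A-module, and let ι: M → Sym(M) denote the canonical inclusion into the degree-one part of the symmetric algebra. For an element m ∈ M, one has ι(m) ∈ I(M) if and only if ev_M(m) = 0. Consequently, the degree-one graded component of the Rees algebra R(M) = Sym(M)/I(M) is isomorphic to the torsionless quotient M^tl. -/

import Mathlib

open Module LinearMap TensorProduct

set_option maxHeartbeats 1600000

/-- The relation on the tensor algebra whose quotient is the symmetric algebra. -/
inductive SymRel (A : Type) [CommRing A] (M : Type) [AddCommGroup M] [Module A M] :
    TensorAlgebra A M → TensorAlgebra A M → Prop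
  | mul_comm (x y : M) : SymRel A M (TensorAlgebra.ι A x * TensorAlgebra.ι A y)
      (TensorAlgebra.ι A y * TensorAlgebra.ι A x)

/-- The symmetric algebra `Sym(M)` of a module `M`. -/
abbrev SymmAlg (A : Type) [CommRing A] (M : Type) [AddCommGroup M] [Module A M] : Type :=
  RingQuot (SymRel A M)

variable {A : Type} [CommRing A] {M N L : Type} [AddCommGroup M] [Module A M]
  [AddCommGroup N] [Module A N] [AddCommGroup L] [Module A L]

private lemma symmAlg_comm_aux (x y : TensorAlgebra A M) :
    RingQuot.mkAlgHom A (SymRel A M) x * RingQuot.mkAlgHom A (SymRel A M) y =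
      RingQuot.mkAlgHom A (SymRel A M) y * RingQuot.mkAlgHom A (SymRel A M) x := by
  induction x using TensorAlgebra.induction with
  | algebraMap r => simp [Algebra.commutes]
  | ι m =>
    induction y using TensorAlgebra.induction with
    | algebraMap r => simp [Algebra.commutes]
    | ι n => simpa [map_mul] using (RingQuot.mkAlgHom_rel A (SymRel.mul_comm m n))
    | mul a b ha hb => rw [map_mul, ← mul_assoc, ha, mul_assoc, hb, ← mul_assoc]
    | add a b ha hb => rw [map_add, mul_add, add_mul, ha, hb]
  | mul a b ha hb => rw [map_mul, mul_assoc, hb, ← mul_assoc, ha, mul_assoc]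
  | add a b ha hb => rw [map_add, add_mul, mul_add, ha, hb]

noncomputable instance (A : Type) [CommRing A] (M : Type) [AddCommGroup M] [Module A M] :
    CommRing (SymmAlg A M) :=
  { (inferInstance : Ring (SymmAlg A M)) with
    mul_comm := fun a b => by
      obtain ⟨x, rfl⟩ := RingQuot.mkAlgHom_surjective A (SymRel A M) a
      obtain ⟨y, rfl⟩ := RingQuot.mkAlgHom_surjective A (SymRel A M) b
      exact symmAlg_comm_aux x y }

/-- The canonical inclusion of `M` into the degree-one part of `Sym(M)`. -/
noncomputable def symι (A : Type) [CommRing A] {M : Type} [AddCommGroup M] [Module A M] :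
    M →ₗ[A] SymmAlg A M :=
  (RingQuot.mkAlgHom A (SymRel A M)).toLinearMap ∘ₗ TensorAlgebra.ι A

/-- Functoriality of the symmetric algebra: `Sym(g) : Sym(M) → Sym(N)`. -/
noncomputable def symMap (A : Type) [CommRing A] {M N : Type} [AddCommGroup M] [Module A M]
    [AddCommGroup N] [Module A N] (g : M →ₗ[A] N) : SymmAlg A M →ₐ[A] SymmAlg A N :=
  RingQuot.liftAlgHom A ⟨TensorAlgebra.lift A ((symι A) ∘ₗ g), by
    intro x y h
    cases h with
    | mul_comm a b => simp [mul_comm]⟩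

@[simp] lemma symMap_ι (g : M →ₗ[A] N) (m : M) :
    symMap A g (symι A m) = symι A (g m) := by
  simp [symMap, symι, RingQuot.liftAlgHom_mkAlgHom_apply]

lemma symmAlg_hom_ext {B : Type} [Semiring B] [Algebra A B] {f g : SymmAlg A M →ₐ[A] B}
    (h : ∀ m : M, f (symι A m) = g (symι A m)) : f = g := by
  have key : f.comp (RingQuot.mkAlgHom A (SymRel A M)) =
      g.comp (RingQuot.mkAlgHom A (SymRel A M)) := by
    apply TensorAlgebra.hom_ext
    apply LinearMap.ext
    intro m
    simpa [symι] using h m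
  apply AlgHom.ext
  intro x
  obtain ⟨x, rfl⟩ := RingQuot.mkAlgHom_surjective A (SymRel A M) x
  exact AlgHom.congr_fun key x

lemma symMap_comp_apply (g : N →ₗ[A] L) (f : M →ₗ[A] N) (x : SymmAlg A M) :
    symMap A (g ∘ₗ f) x = symMap A g (symMap A f x) := by
  have : symMap A (g ∘ₗ f) = (symMap A g).comp (symMap A f) := by
    apply symmAlg_hom_ext
    intro m
    simp
  rw [this]; rfl

/-- The data of a linear map from `M` into a finitely generated free module. -/
structure FreeTarget (A : Type) [CommRing A] (M : Type) [AddCommGroup M] [Module A M] where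
  E : Type
  [instAddCommGroup : AddCommGroup E]
  [instModule : Module A E]
  [instFree : Module.Free A E]
  [instFinite : Module.Finite A E]
  g : M →ₗ[A] E

attribute [instance] FreeTarget.instAddCommGroup FreeTarget.instModule
  FreeTarget.instFree FreeTarget.instFinite

/-- The ideal `I(M) ⊆ Sym(M)`: the intersection over all maps `g : M → E` into finitely
generated free modules of the kernels of `Sym(g)`. -/
noncomputable def reesIdeal (A : Type) [CommRing A] (M : Type) [AddCommGroup M]
    [Module A M] : Ideal (SymmAlg A M) :=
  ⨅ d : FreeTarget A M, RingHom.ker (symMap A d.g)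

lemma reesIdeal_le_comap (f : M →ₗ[A] N) :
    reesIdeal A M ≤ Ideal.comap (symMap A f) (reesIdeal A N) := by
  intro x hx
  simp only [reesIdeal, Ideal.mem_iInf] at hx
  simp only [Ideal.mem_comap, reesIdeal, Ideal.mem_iInf]
  intro d
  have hd := hx ⟨d.E, d.g ∘ₗ f⟩
  rw [RingHom.mem_ker] at hd ⊢
  rw [← symMap_comp_apply]
  exact hd

/-- The Rees algebra `R(M) = Sym(M)/I(M)` of a module `M`. -/
noncomputable abbrev ReesAlg (A : Type) [CommRing A] (M : Type) [AddCommGroup M]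
    [Module A M] : Type :=
  SymmAlg A M ⧸ reesIdeal A M

/-- The induced map `R(f) : R(M) → R(N)` of Rees algebras. -/
noncomputable def reesMap (A : Type) [CommRing A] {M N : Type} [AddCommGroup M]
    [Module A M] [AddCommGroup N] [Module A N] (f : M →ₗ[A] N) :
    ReesAlg A M →ₐ[A] ReesAlg A N :=
  Ideal.quotientMapₐ (reesIdeal A N) (symMap A f) (reesIdeal_le_comap f)

/-- The algebra map `Sym(A) → A[X]` sending `ι(a)` to `a • X`. -/
noncomputable def symToPoly : SymmAlg A A →ₐ[A] Polynomial A :=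
  RingQuot.liftAlgHom A ⟨TensorAlgebra.lift A
    (LinearMap.toSpanSingleton A (Polynomial A) Polynomial.X), by
    intro x y h
    cases h with
    | mul_comm a b =>
      simp only [map_mul, TensorAlgebra.lift_ι_apply]
      exact mul_comm _ _⟩

@[simp] lemma symToPoly_ι (a : A) : symToPoly (symι A a) = a • Polynomial.X := by
  simp only [symToPoly, symι, LinearMap.coe_comp, Function.comp_apply,
    AlgHom.toLinearMap_apply, RingQuot.liftAlgHom_mkAlgHom_apply, TensorAlgebra.lift_ι_apply,
    LinearMap.toSpanSingleton_apply]

lemma symι_self_eq_zero_iff (a : A) : symι A a = 0 ↔ a = 0 := by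
  constructor
  · intro h
    have := congrArg symToPoly h
    simp only [symToPoly_ι, map_zero] at this
    have := congrArg (Polynomial.coeff · 1) this
    simpa [Polynomial.smul_X_eq_monomial] using this
  · rintro rfl; simp

lemma key_mem_iff (m : M) :
    symι A m ∈ reesIdeal A M ↔ Module.Dual.eval A M m = 0 := by
  constructor
  · intro h
    ext φ
    simp only [reesIdeal, Ideal.mem_iInf] at h
    have hφ := h ⟨A, φ⟩
    rw [RingHom.mem_ker] at hφ
    have : symι A (φ m) = 0 := by simpa using hφ
    simpa using (symι_self_eq_zero_iff (φ m)).mp this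
  · intro h
    have hφ : ∀ φ : M →ₗ[A] A, φ m = 0 := fun φ => congrFun (congrArg DFunLike.coe h) φ
    simp only [reesIdeal, Ideal.mem_iInf]
    intro d
    rw [RingHom.mem_ker]
    have hgm : d.g m = 0 := by
      let b := Module.Free.chooseBasis A d.E
      rw [← b.forall_coord_eq_zero_iff]
      intro i
      exact hφ ((b.coord i) ∘ₗ d.g)
    rw [symMap_ι, hgm, map_zero]

/-- For `m : M`, the element `ι(m) ∈ Sym(M)` lies in `I(M)` iff `ev_M(m) = 0`.
Consequently the degree-one part of `R(M)`, i.e. the image of `M` in `R(M)`,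
is isomorphic to the torsionless quotient `M^tl = im(ev_M)`. -/
theorem stmt7 (A : Type) [CommRing A] [IsNoetherianRing A]
    (M : Type) [AddCommGroup M] [Module A M] [Module.Finite A M] :
    (∀ m : M, symι A m ∈ reesIdeal A M ↔ Module.Dual.eval A M m = 0) ∧
      Nonempty
        (↥(LinearMap.range
            ((Ideal.Quotient.mkₐ A (reesIdeal A M)).toLinearMap ∘ₗ
              (symι A : M →ₗ[A] SymmAlg A M))) ≃ₗ[A]
          ↥(LinearMap.range (Module.Dual.eval A M))) := by
  refine ⟨fun m => key_mem_iff m, ?_⟩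
  set q : M →ₗ[A] ReesAlg A M :=
    (Ideal.Quotient.mkₐ A (reesIdeal A M)).toLinearMap ∘ₗ (symι A : M →ₗ[A] SymmAlg A M) with hq
  have hker : LinearMap.ker q = LinearMap.ker (Module.Dual.eval A M) := by
    ext m
    simp only [LinearMap.mem_ker, hq, LinearMap.coe_comp, Function.comp_apply,
      AlgHom.toLinearMap_apply, Ideal.Quotient.mkₐ_eq_mk]
    rw [Ideal.Quotient.eq_zero_iff_mem]
    exact key_mem_iff m
  exact ⟨(q.quotKerEquivRange.symm.trans
    (Submodule.quotEquivOfEq _ _ hker)).trans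
    (Module.Dual.eval A M).quotKerEquivRange⟩
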